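/- Let K be a field and f = Σ_{n≥0} aₙ tⁿ ∈ K[[t]] a formal power series. Then f is the expansion of a rational function (i.e., there exist polynomials P, Q ∈ K[t] with Q ≠ 0 and Q·f = P in K[[t]]) if and only if there exist natural numbers M and N such that for every k > N the Hankel determinant det((a_{i+j+k})_{0≤i,j≤M}) vanishes. -/

import Mathlib

open Finset

namespace HankelRationality

variable {K : Type*} [Field K]


def hrow (a : ℕ → K) (M k : ℕ) : Fin (M+1) → (Fin (M+1) → K) :=
  fun i j => a ((i : ℕ) + (j : ℕ) + k)

def smallH (a : ℕ → K) (M k : ℕ) : Matrix (Fin (M+1)) (Fin (M+1)) K :=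
  Matrix.of fun i j => a ((i : ℕ) + (j : ℕ) + k)

def bigH (a : ℕ → K) (M k : ℕ) : Matrix (Fin (M+2)) (Fin (M+2)) K :=
  Matrix.of fun i j => a ((i : ℕ) + (j : ℕ) + k)

def Edisc (a : ℕ → K) (M : ℕ) (c : Fin (M+1) → K) (n : ℕ) : K :=
  a (n + (M+1)) - ∑ j : Fin (M+1), c j * a (n + (j : ℕ))

lemma coeff_poly_mul (Q : Polynomial K) (f : PowerSeries K) (d n : ℕ)
    (hQ : Q.natDegree ≤ d) (hdn : d ≤ n) :
    PowerSeries.coeff n ((Q : PowerSeries K) * f)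
      = ∑ j : Fin (d+1), Q.coeff (d - (j : ℕ)) * PowerSeries.coeff (n - d + j) f := by
  rw [PowerSeries.coeff_mul, Finset.Nat.sum_antidiagonal_eq_sum_range_succ_mk]
  have hsub : range (d+1) ⊆ range (n+1) := by
    apply Finset.range_subset_range.mpr; omega
  rw [← Finset.sum_subset hsub (by
    intro x hx hxd
    have : Q.natDegree < x := by
      simp only [Finset.mem_range] at hx hxd; omega
    rw [Polynomial.coeff_coe, Polynomial.coeff_eq_zero_of_natDegree_lt this, zero_mul])]
  rw [Fin.sum_univ_eq_sum_range (fun j => Q.coeff (d - j) * PowerSeries.coeff (n - d + j) f)]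
  conv_lhs => rw [← Finset.sum_range_reflect]
  apply Finset.sum_congr rfl
  intro x hx
  simp only [Finset.mem_range] at hx
  rw [Polynomial.coeff_coe]
  have h1 : d + 1 - 1 - x = d - x := by omega
  have h2 : n - (d - x) = n - d + x := by omega
  rw [h1, h2]


lemma rational_of_rec (f : PowerSeries K) (m N' : ℕ) (c : Fin m → K)
    (h : ∀ n, N' < n → PowerSeries.coeff (n + m) f
        = ∑ j : Fin m, c j * PowerSeries.coeff (n + (j : ℕ)) f) :
    ∃ P Q : Polynomial K, Q ≠ 0 ∧ (Q : PowerSeries K) * f = (P : PowerSeries K) := by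
  classical
  set S : Polynomial K := ∑ j : Fin m, Polynomial.C (c j) * Polynomial.X ^ (m - (j : ℕ)) with hS
  set Q : Polynomial K := 1 - S with hQdef
  have hS0 : ∀ i : ℕ, S.coeff i = ∑ j : Fin m, c j * (if i = m - (j:ℕ) then 1 else 0) := by
    intro i
    rw [hS, Polynomial.finset_sum_coeff]
    exact Finset.sum_congr rfl fun j _ => by
      rw [Polynomial.coeff_C_mul, Polynomial.coeff_X_pow]
  have hQ0 : Q.coeff 0 = 1 := by
    rw [hQdef, Polynomial.coeff_sub, Polynomial.coeff_one, hS0]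
    have : ∀ j : Fin m, c j * (if 0 = m - (j:ℕ) then 1 else 0) = 0 := by
      intro j
      have : ¬ (0 = m - (j:ℕ)) := by have := j.isLt; omega
      rw [if_neg this, mul_zero]
    rw [Finset.sum_congr rfl (fun j _ => this j), Finset.sum_const_zero]
    simp
  have hQne : Q ≠ 0 := fun hq => by simp [hq] at hQ0
  have hdeg : Q.natDegree ≤ m := by
    refine le_trans (Polynomial.natDegree_sub_le _ _) (max_le (by simp) ?_)
    refine Polynomial.natDegree_sum_le_of_forall_le _ _ fun j _ => ?_
    exact le_trans (Polynomial.natDegree_C_mul_le _ _)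
      (le_trans (Polynomial.natDegree_X_pow_le _) (Nat.sub_le m _))
  have hcQ : ∀ j : Fin m, Q.coeff (m - (j : ℕ)) = - c j := by
    intro j
    rw [hQdef, Polynomial.coeff_sub, Polynomial.coeff_one, hS0]
    have hne : ¬ (m - (j:ℕ) = 0) := by have := j.isLt; omega
    rw [if_neg hne]
    rw [Finset.sum_eq_single_of_mem j (Finset.mem_univ j)
      (fun j' _ hj' => by
        have h1 := j.isLt; have h2 := j'.isLt
        have : ¬ (m - (j:ℕ) = m - (j':ℕ)) := by
          intro hc; apply hj'; apply Fin.ext; omega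
        rw [if_neg this, mul_zero])]
    rw [if_pos rfl, mul_one]; ring
  have hvan : ∀ n, N' + m < n → PowerSeries.coeff n ((Q : PowerSeries K) * f) = 0 := by
    intro n hn
    rw [coeff_poly_mul Q f m n hdeg (by omega)]
    rw [Fin.sum_univ_castSucc]
    have hlast : ((Fin.last m : Fin (m+1)) : ℕ) = m := rfl
    have hlast2 : Q.coeff (m - m) = 1 := by
      have : m - m = 0 := by omega
      rw [this, hQ0]
    rw [hlast, hlast2, one_mul]
    have hnm : n - m + m = n := by omega
    rw [hnm]
    have hrec := h (n - m) (by omega)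
    have hx : n - m + m = n := by omega
    rw [hx] at hrec
    rw [hrec, ← Finset.sum_add_distrib]
    apply Finset.sum_eq_zero
    intro j _
    rw [Fin.coe_castSucc, hcQ j]
    ring
  refine ⟨PowerSeries.trunc (N' + m + 1) ((Q : PowerSeries K) * f), Q, hQne, ?_⟩
  apply PowerSeries.ext
  intro n
  rw [Polynomial.coeff_coe, PowerSeries.coeff_trunc]
  by_cases hn : n < N' + m + 1
  · rw [if_pos hn]
  · rw [if_neg hn]
    exact hvan n (by omega)


lemma forward_dir (f : PowerSeries K) (P Q : Polynomial K) (hQ : Q ≠ 0)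
    (hQf : (Q : PowerSeries K) * f = (P : PowerSeries K)) :
    ∀ k : ℕ, P.natDegree < k →
      (Matrix.of fun i j : Fin (Q.natDegree + 1) =>
        PowerSeries.coeff ((i : ℕ) + (j : ℕ) + k) f).det = 0 := by
  intro k hk
  set M := Q.natDegree with hM
  rw [← Matrix.exists_mulVec_eq_zero_iff]
  refine ⟨fun j : Fin (M+1) => Q.coeff (M - (j : ℕ)), ?_, ?_⟩
  · intro h0
    have h1 : Q.coeff (M - ((0 : Fin (M+1)) : ℕ)) = 0 := congrFun h0 0
    simp only [Fin.val_zero, Nat.sub_zero] at h1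
    exact Polynomial.leadingCoeff_ne_zero.mpr hQ h1
  · funext i
    have hcalc : PowerSeries.coeff ((i : ℕ) + k + M) ((Q : PowerSeries K) * f)
        = ∑ j : Fin (M+1), Q.coeff (M - (j : ℕ))
            * PowerSeries.coeff ((i : ℕ) + k + M - M + j) f :=
      coeff_poly_mul Q f M ((i : ℕ) + k + M) (le_refl _) (by omega)
    have hzero : PowerSeries.coeff ((i : ℕ) + k + M) ((Q : PowerSeries K) * f) = 0 := by
      rw [hQf, Polynomial.coeff_coe]
      exact Polynomial.coeff_eq_zero_of_natDegree_lt (by omega)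
    rw [hzero] at hcalc
    show ∑ j : Fin (M+1), (Matrix.of fun i j : Fin (M + 1) =>
        PowerSeries.coeff ((i : ℕ) + (j : ℕ) + k) f) i j * Q.coeff (M - (j : ℕ)) = 0
    rw [← hcalc.symm]
    apply Finset.sum_congr rfl
    intro j _
    have : (i : ℕ) + k + M - M + (j : ℕ) = (i : ℕ) + (j : ℕ) + k := by omega
    rw [Matrix.of_apply, ← this, mul_comm]


lemma getc (a : ℕ → K) (M s : ℕ)
    (h0 : (bigH a M s).det = 0) (hdet : (smallH a M s).det ≠ 0) :
    ∃ c : Fin (M+1) → K, ∀ n, s ≤ n → n ≤ s + M + 1 → Edisc a M c n = 0 := by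
  obtain ⟨v, hvne, hvmul⟩ := Matrix.exists_mulVec_eq_zero_iff.mpr h0
  have hrowEq : ∀ i : Fin (M+2), ∑ j : Fin (M+2), a ((i:ℕ)+(j:ℕ)+s) * v j = 0 := by
    intro i
    have := congrFun hvmul i
    simpa [Matrix.mulVec, dotProduct, bigH] using this
  have hlast : v (Fin.last (M+1)) ≠ 0 := by
    intro hl
    apply hdet
    rw [← Matrix.exists_mulVec_eq_zero_iff]
    refine ⟨fun j => v j.castSucc, ?_, ?_⟩
    · intro h0'
      apply hvne
      funext j
      rcases Fin.eq_castSucc_or_eq_last j with ⟨j', rfl⟩ | rfl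
      · exact congrFun h0' j'
      · exact hl
    · funext i
      have h1 := hrowEq i.castSucc
      rw [Fin.sum_univ_castSucc] at h1
      rw [hl, mul_zero, add_zero] at h1
      show ∑ j : Fin (M+1), smallH a M s i j * v j.castSucc = 0
      rw [← h1]
      apply Finset.sum_congr rfl
      intro j _
      simp [smallH]
  refine ⟨fun j => - v j.castSucc / v (Fin.last (M+1)), ?_⟩
  intro n hn1 hn2
  set L := v (Fin.last (M+1)) with hLdef
  have hL : L ≠ 0 := hlast
  have h1 := hrowEq ⟨n - s, by omega⟩
  rw [Fin.sum_univ_castSucc] at h1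
  simp only [Fin.coe_castSucc, Fin.val_last, Fin.val_mk] at h1
  have e1 : ∀ j : Fin (M+1), n - s + (j : ℕ) + s = n + (j : ℕ) := fun j => by omega
  have e2 : n - s + (M+1) + s = n + (M+1) := by omega
  simp only [e1, e2] at h1
  have key : L * Edisc a M (fun j => - v j.castSucc / L) n = 0 := by
    rw [Edisc, mul_sub, Finset.mul_sum]
    rw [Finset.sum_congr rfl (fun (j : Fin (M+1)) (_ : j ∈ univ) => by
      show L * (- v j.castSucc / L * a (n + (j : ℕ))) = -(a (n + (j : ℕ)) * v j.castSucc)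
      field_simp)]
    rw [Finset.sum_neg_distrib, sub_neg_eq_add]
    linear_combination h1
  exact (mul_eq_zero.mp key).resolve_left hL


lemma rows_mem_span (a : ℕ → K) (M : ℕ) (c : Fin (M+1) → K) (n s : ℕ)
    (hE : ∀ q, n + 1 ≤ q → q ≤ s + M + 1 → Edisc a M c q = 0) :
    ∀ t, n + 1 ≤ t → t ≤ s + M →
      (fun j : Fin (M+1) => a (t + (j : ℕ)))
        ∈ Submodule.span K (Set.range (hrow a M (n+1))) := by
  intro t
  induction t using Nat.strong_induction_on with
  | _ t ih =>
    intro ht1 ht2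
    by_cases hcase : t ≤ n + 1 + M
    · apply Submodule.subset_span
      refine ⟨⟨t - (n+1), by omega⟩, ?_⟩
      funext j
      show a ((t - (n+1)) + (j : ℕ) + (n+1)) = a (t + (j : ℕ))
      congr 1
      omega
    · -- t ≥ n + M + 2, use the recurrence
      have hq1 : n + 1 ≤ t - (M+1) := by omega
      have heq : (fun j : Fin (M+1) => a (t + (j : ℕ)))
          = ∑ l : Fin (M+1), c l • (fun j : Fin (M+1) => a ((t - (M+1) + (l : ℕ)) + (j : ℕ))) := by
        funext j
        rw [Finset.sum_apply]
        have hEq := hE (t - (M+1) + (j : ℕ)) (by omega) (by omega)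
        rw [Edisc, sub_eq_zero] at hEq
        have e3 : t - (M+1) + (j:ℕ) + (M+1) = t + (j:ℕ) := by omega
        rw [e3] at hEq
        rw [hEq]
        apply Finset.sum_congr rfl
        intro l _
        have e4 : t - (M+1) + (j:ℕ) + (l:ℕ) = t - (M+1) + (l:ℕ) + (j:ℕ) := by omega
        simp only [Pi.smul_apply, smul_eq_mul, e4]
      rw [heq]
      apply Submodule.sum_mem
      intro l _
      apply Submodule.smul_mem
      exact ih (t - (M+1) + (l : ℕ)) (by have := l.isLt; omega) (by omega)
        (by have := l.isLt; omega)


lemma det_small_next (a : ℕ → K) (M : ℕ) (c : Fin (M+1) → K) (n s : ℕ)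
    (hns : n + 1 ≤ s)
    (hE : ∀ q, n + 1 ≤ q → q ≤ s + M + 1 → Edisc a M c q = 0)
    (hdets : (smallH a M s).det ≠ 0) :
    (smallH a M (n+1)).det ≠ 0 := by
  intro h0
  obtain ⟨u, hune, humul⟩ := Matrix.exists_vecMul_eq_zero_iff.mpr h0
  -- rows of smallH s are linearly independent
  have hLI : LinearIndependent K (hrow a M s) := by
    rw [Fintype.linearIndependent_iff]
    intro g hg
    by_contra hgg
    push_neg at hgg
    obtain ⟨i, hi⟩ := hgg
    apply hdets
    rw [← Matrix.exists_vecMul_eq_zero_iff]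
    refine ⟨g, fun h => hi (congrFun h i), ?_⟩
    funext j
    have := congrFun hg j
    simpa [Matrix.vecMul, dotProduct, smallH, hrow, Finset.sum_apply] using this
  -- rows of smallH (n+1) are linearly dependent
  have hdep : ¬ LinearIndependent K (hrow a M (n+1)) := by
    rw [Fintype.linearIndependent_iff]
    push_neg
    refine ⟨u, ?_, ?_⟩
    · funext j
      have := congrFun humul j
      simp only [Matrix.vecMul, dotProduct, smallH, hrow, Matrix.of_apply] at this ⊢
      rw [Finset.sum_apply]
      simpa [hrow] using this
    · exact Function.ne_iff.mp hune
  -- span inclusion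
  have hle : Submodule.span K (Set.range (hrow a M s))
      ≤ Submodule.span K (Set.range (hrow a M (n+1))) := by
    rw [Submodule.span_le]
    rintro x ⟨i, rfl⟩
    have := rows_mem_span a M c n s hE (s + (i : ℕ)) (by omega) (by have := i.isLt; omega)
    rw [SetLike.mem_coe]
    convert this using 1
    funext j
    show a ((i:ℕ) + (j:ℕ) + s) = a ((s + (i:ℕ)) + (j:ℕ))
    congr 1; omega
  -- dimension count
  have hcard : Fintype.card (Fin (M+1)) = (Set.range (hrow a M s)).finrank K :=
    linearIndependent_iff_card_eq_finrank_span.mp hLI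
  rw [Fintype.card_fin] at hcard
  have hupper : (Set.range (hrow a M (n+1))).finrank K ≤ M := by
    have hne : Fintype.card (Fin (M+1)) ≠ (Set.range (hrow a M (n+1))).finrank K :=
      fun h => hdep (linearIndependent_iff_card_eq_finrank_span.mpr h)
    have hle' := finrank_range_le_card (R := K) (hrow a M (n+1))
    rw [Fintype.card_fin] at hne hle'
    omega
  have hmono : (Set.range (hrow a M s)).finrank K
      ≤ (Set.range (hrow a M (n+1))).finrank K := by
    show Module.finrank K (Submodule.span K (Set.range (hrow a M s)))
      ≤ Module.finrank K (Submodule.span K (Set.range (hrow a M (n+1))))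
    exact Submodule.finrank_mono hle
  omega


lemma E_prev (a : ℕ → K) (M : ℕ) (c : Fin (M+1) → K) (n : ℕ)
    (hdetnext : (smallH a M (n+1)).det ≠ 0)
    (hbign : (bigH a M n).det = 0)
    (hE : ∀ q, n + 1 ≤ q → q ≤ n + M + 1 → Edisc a M c q = 0) :
    Edisc a M c n = 0 := by
  obtain ⟨lam, hlne, hlmul⟩ := Matrix.exists_vecMul_eq_zero_iff.mpr hbign
  have hcol : ∀ j : Fin (M+2), ∑ i : Fin (M+2), lam i * a ((i:ℕ)+(j:ℕ)+n) = 0 := by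
    intro j
    have := congrFun hlmul j
    simpa [Matrix.vecMul, dotProduct, bigH] using this
  set L := lam (Fin.last (M+1)) with hLdef
  set μ : Fin (M+1) → K := fun i => lam i.castSucc + L * c i with hμdef
  have hμvm : Matrix.vecMul μ (smallH a M (n+1)) = 0 := by
    funext j
    show ∑ i : Fin (M+1), μ i * smallH a M (n+1) i j = 0
    have h1 := hcol j.succ
    rw [Fin.sum_univ_castSucc] at h1
    simp only [Fin.coe_castSucc, Fin.val_last, Fin.val_succ] at h1
    have e1 : ∀ i : Fin (M+1), (i:ℕ) + ((j:ℕ) + 1) + n = (i:ℕ) + (j:ℕ) + (n+1) :=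
      fun i => by omega
    have e2 : (M+1) + ((j:ℕ) + 1) + n = (n+1+(j:ℕ)) + (M+1) := by omega
    simp only [e1, e2] at h1
    have hEq := hE (n+1+(j:ℕ)) (by omega) (by have := j.isLt; omega)
    rw [Edisc, sub_eq_zero] at hEq
    have e3 : ∀ l : Fin (M+1), (n+1+(j:ℕ)) + (l:ℕ) = (l:ℕ) + (j:ℕ) + (n+1) :=
      fun l => by omega
    simp only [e3] at hEq
    rw [hEq] at h1
    simp only [smallH, Matrix.of_apply, hμdef, add_mul]
    rw [Finset.sum_add_distrib]
    simp only [mul_assoc]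
    rw [← Finset.mul_sum]
    exact h1
  have hμ0 : μ = 0 := by
    by_contra hne
    exact hdetnext (Matrix.exists_vecMul_eq_zero_iff.mp ⟨μ, hne, hμvm⟩)
  have hLne : L ≠ 0 := by
    intro hL0
    apply hlne
    funext i
    induction i using Fin.lastCases with
    | last => exact hL0
    | cast i' =>
      have h2 := congrFun hμ0 i'
      simp only [hμdef, Pi.zero_apply] at h2
      rw [hL0, zero_mul, add_zero] at h2
      exact h2
  have hlamc : ∀ i : Fin (M+1), lam i.castSucc = -(L * c i) := by
    intro i
    have h2 := congrFun hμ0 i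
    simp only [hμdef, Pi.zero_apply] at h2
    linear_combination h2
  have h0 := hcol 0
  rw [Fin.sum_univ_castSucc] at h0
  simp only [Fin.coe_castSucc, Fin.val_last, Fin.val_zero] at h0
  have e4 : ∀ i : Fin (M+1), (i:ℕ) + 0 + n = n + (i:ℕ) := fun i => by omega
  have e5 : (M+1) + 0 + n = n + (M+1) := by omega
  simp only [e4, e5, hlamc] at h0
  simp only [neg_mul, mul_assoc] at h0
  rw [Finset.sum_neg_distrib] at h0
  have key : L * Edisc a M c n = 0 := by
    rw [Edisc, mul_sub, Finset.mul_sum]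
    linear_combination h0
  exact (mul_eq_zero.mp key).resolve_left hLne


lemma E_all (a : ℕ → K) (M : ℕ) (c : Fin (M+1) → K) (N s : ℕ)
    (hbig : ∀ k, N < k → (bigH a M k).det = 0) (hs : N < s)
    (hdets : (smallH a M s).det ≠ 0)
    (hE0 : ∀ q, s ≤ q → q ≤ s + M + 1 → Edisc a M c q = 0) :
    ∀ n, N < n → n ≤ s + M + 1 → Edisc a M c n = 0 := by
  have key : ∀ d n, N < n → n ≤ s + M + 1 → s ≤ n + d → Edisc a M c n = 0 := by
    intro d
    induction d with
    | zero => intro n h1 h2 h3; exact hE0 n (by omega) h2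
    | succ d ih =>
      intro n h1 h2 h3
      by_cases hcase : s ≤ n + d
      · exact ih n h1 h2 hcase
      · have hn1s : n + 1 ≤ s := by omega
        have hEup : ∀ q, n + 1 ≤ q → q ≤ s + M + 1 → Edisc a M c q = 0 := by
          intro q hq1 hq2
          exact ih q (by omega) hq2 (by omega)
        have hdetnext := det_small_next a M c n s hn1s hEup hdets
        apply E_prev a M c n hdetnext (hbig n h1)
        intro q hq1 hq2
        exact hEup q hq1 (by omega)
  intro n h1 h2
  exact key s n h1 h2 (by omega)

lemma core (a : ℕ → K) (M N : ℕ)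
    (hbig : ∀ k, N < k → (bigH a M k).det = 0)
    (hinf : ∀ L, ∃ s, L < s ∧ (smallH a M s).det ≠ 0) :
    ∃ c : Fin (M+1) → K, ∀ n, N < n → Edisc a M c n = 0 := by
  obtain ⟨s₀, hs₀, hdet₀⟩ := hinf N
  obtain ⟨c₀, hc₀⟩ := getc a M s₀ (hbig s₀ hs₀) hdet₀
  refine ⟨c₀, ?_⟩
  intro n hn
  obtain ⟨s, hs1, hdets⟩ := hinf (max n s₀)
  have hsn : n < s := lt_of_le_of_lt (le_max_left _ _) hs1
  have hss₀ : s₀ < s := lt_of_le_of_lt (le_max_right _ _) hs1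
  have hsN : N < s := by omega
  obtain ⟨c, hc⟩ := getc a M s (hbig s hsN) hdets
  have hcall : ∀ m, N < m → m ≤ s + M + 1 → Edisc a M c m = 0 :=
    E_all a M c N s hbig hsN hdets hc
  have hceq : ∀ j, c j = c₀ j := by
    have hd : Matrix.mulVec (smallH a M s₀) (fun j => c j - c₀ j) = 0 := by
      funext i
      show ∑ j : Fin (M+1), smallH a M s₀ i j * (c j - c₀ j) = 0
      have h1 := hcall (s₀ + (i:ℕ)) (by omega) (by have := i.isLt; omega)
      have h2 := hc₀ (s₀ + (i:ℕ)) (by omega) (by have := i.isLt; omega)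
      rw [Edisc, sub_eq_zero] at h1 h2
      have e6 : ∀ j : Fin (M+1), (i:ℕ)+(j:ℕ)+s₀ = (s₀+(i:ℕ))+(j:ℕ) := fun j => by omega
      simp only [smallH, Matrix.of_apply, e6]
      have h3 : ∑ j : Fin (M+1), a ((s₀+(i:ℕ))+(j:ℕ)) * c j
          = ∑ j : Fin (M+1), a ((s₀+(i:ℕ))+(j:ℕ)) * c₀ j := by
        calc ∑ j : Fin (M+1), a ((s₀+(i:ℕ))+(j:ℕ)) * c j
            = ∑ j : Fin (M+1), c j * a ((s₀+(i:ℕ))+(j:ℕ)) :=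
              Finset.sum_congr rfl (fun j _ => mul_comm _ _)
          _ = a ((s₀+(i:ℕ)) + (M+1)) := h1.symm
          _ = ∑ j : Fin (M+1), c₀ j * a ((s₀+(i:ℕ))+(j:ℕ)) := h2
          _ = ∑ j : Fin (M+1), a ((s₀+(i:ℕ))+(j:ℕ)) * c₀ j :=
              Finset.sum_congr rfl (fun j _ => mul_comm _ _)
      simp only [mul_sub]
      rw [Finset.sum_sub_distrib, h3, sub_self]
    by_contra hne
    push_neg at hne
    obtain ⟨j₀, hj₀⟩ := hne
    apply hdet₀
    apply Matrix.exists_mulVec_eq_zero_iff.mp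
    refine ⟨fun j => c j - c₀ j, ?_, hd⟩
    intro hzero
    apply hj₀
    have := congrFun hzero j₀
    simp only [Pi.zero_apply] at this
    linear_combination this
  have hEeq : Edisc a M c₀ n = Edisc a M c n := by
    rw [Edisc, Edisc]
    congr 1
    exact Finset.sum_congr rfl (fun j _ => by rw [hceq j])
  rw [hEeq]
  exact hcall n hn (by omega)

lemma converse_rec (a : ℕ → K) : ∀ M N : ℕ,
    (∀ k, N < k →
      (Matrix.of fun i j : Fin (M+1) => a ((i:ℕ)+(j:ℕ)+k)).det = 0) →
    ∃ (m : ℕ) (N' : ℕ) (c : Fin m → K), ∀ n, N' < n →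
      a (n + m) = ∑ j : Fin m, c j * a (n + (j:ℕ)) := by
  intro M
  induction M with
  | zero =>
    intro N h
    refine ⟨0, N, fun _ => 0, ?_⟩
    intro n hn
    have h1 := h n hn
    rw [Matrix.det_fin_one] at h1
    simp only [Matrix.of_apply, Fin.val_zero] at h1
    norm_num at h1 ⊢
    exact h1
  | succ M ih =>
    intro N h
    by_cases hcase : ∃ N₁, ∀ k, N₁ < k →
        (Matrix.of fun i j : Fin (M+1) => a ((i:ℕ)+(j:ℕ)+k)).det = 0
    · obtain ⟨N₁, h₁⟩ := hcase
      exact ih N₁ h₁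
    · push_neg at hcase
      have hbig : ∀ k, N < k → (bigH a M k).det = 0 := fun k hk => h k hk
      have hinf : ∀ L, ∃ s, L < s ∧ (smallH a M s).det ≠ 0 := by
        intro L
        obtain ⟨s, hs1, hs2⟩ := hcase L
        exact ⟨s, hs1, hs2⟩
      obtain ⟨c, hcall⟩ := core a M N hbig hinf
      refine ⟨M+1, N, c, ?_⟩
      intro n hn
      have h1 := hcall n hn
      rw [Edisc, sub_eq_zero] at h1
      exact h1

end HankelRationality

/-- The Hankel determinant criterion for rationality of a formal power series, used in
Deligne's Weil I in the proof that (1.7) implies (1.6): `f = ∑ aₙ tⁿ ∈ K[[t]]` is the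
expansion of a rational function if and only if for some `M`, `N`, all the Hankel
determinants `det((a_{i+j+k})_{0 ≤ i,j ≤ M})` with `k > N` vanish. -/
theorem powerSeries_rational_iff_hankel_determinants_vanish
    {K : Type*} [Field K] (f : PowerSeries K) :
    (∃ P Q : Polynomial K, Q ≠ 0 ∧ (Q : PowerSeries K) * f = (P : PowerSeries K)) ↔
      ∃ M N : ℕ, ∀ k : ℕ, N < k →
        (Matrix.of fun i j : Fin (M + 1) =>
            PowerSeries.coeff ((i : ℕ) + (j : ℕ) + k) f).det = 0 := by
  constructor
  · rintro ⟨P, Q, hQ, hQf⟩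
    exact ⟨Q.natDegree, P.natDegree, HankelRationality.forward_dir f P Q hQ hQf⟩
  · rintro ⟨M, N, h⟩
    obtain ⟨m, N', c, hrec⟩ :=
      HankelRationality.converse_rec (fun n => PowerSeries.coeff n f) M N h
    exact HankelRationality.rational_of_rec f m N' c hrec
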